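/- Let F : C ⥤ X be a faithful essential localization, and assume that every pullback stable essential monomorphism in X is an isomorphism and that X is balanced. Then a morphism m in C is a pullback stable essential monomorphism if and only if m is a bimorphism (both a monomorphism and an epimorphism). -/

import Mathlib

open CategoryTheory Limits

/-- A morphism `m` is an essential monomorphism if it is a monomorphism and every
morphism `f` such that `m ≫ f` is a monomorphism is itself a monomorphism. -/
def IsEssentialMono {C : Type*} [CategoryTheory.Category C] {S A : C} (m : S ⟶ A) : Prop :=
  CategoryTheory.Mono m ∧
    ∀ ⦃B : C⦄ (f : A ⟶ B), CategoryTheory.Mono (m ≫ f) → CategoryTheory.Mono f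

/-- A morphism `m : S ⟶ A` is a pullback stable essential monomorphism if for every
morphism `u : X ⟶ A` the pullback projection `S ×_A X ⟶ X` of `m` along `u` is an
essential monomorphism. -/
def IsStableEssentialMono {C : Type*} [CategoryTheory.Category C]
    [CategoryTheory.Limits.HasPullbacks C] {S A : C} (m : S ⟶ A) : Prop :=
  ∀ ⦃X : C⦄ (u : X ⟶ A), IsEssentialMono (CategoryTheory.Limits.pullback.snd m u)

section Aux

variable {C : Type*} [Category C] {X : Type*} [Category X]
    [HasFiniteLimits C] [HasFiniteLimits X]
    (F : C ⥤ X) [PreservesFiniteLimits F] [F.Faithful]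

/-- If `F.map m` is an isomorphism, `m` is a stable essential mono. -/
theorem aux_stable_of_isIso {S A : C} (m : S ⟶ A) (h : IsIso (F.map m)) :
    IsStableEssentialMono m := by
  intro T u
  haveI : Mono m := F.mono_of_mono_map (by haveI := h; infer_instance)
  have S1 : IsPullback (F.map (pullback.fst m u)) (F.map (pullback.snd m u))
      (F.map m) (F.map u) := (IsPullback.of_hasPullback m u).map F
  haveI := h
  have hsnd : F.map (pullback.snd m u)
      = S1.isoPullback.hom ≫ pullback.snd (F.map m) (F.map u) := by
    rw [S1.isoPullback_hom_snd]
  have hiso : IsIso (F.map (pullback.snd m u)) := by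
    rw [hsnd]; infer_instance
  refine ⟨inferInstance, ?_⟩
  intro B f hf
  apply F.mono_of_mono_map
  have : Mono (F.map (pullback.snd m u) ≫ F.map f) := by
    rw [← F.map_comp]; exact F.map_mono _
  haveI := hiso
  have : F.map f = inv (F.map (pullback.snd m u)) ≫
      (F.map (pullback.snd m u) ≫ F.map f) := by simp
  rw [this]
  exact mono_comp _ _

end Aux

section KL

variable {C : Type*} [Category C] {X : Type*} [Category X]
    [HasFiniteLimits C] [HasFiniteLimits X]
    (F : C ⥤ X) (G : X ⥤ C) (H : X ⥤ C)

/-- `F` maps stable essential monos to stable essential monos. -/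
theorem aux_map_stable
    (adj : F ⊣ G) [PreservesFiniteLimits F] [F.Faithful] [G.Full] [G.Faithful]
    (adj' : H ⊣ F) {S A : C} (m : S ⟶ A) (hm : IsStableEssentialMono m) :
    IsStableEssentialMono (F.map m) := by
  haveI : F.IsRightAdjoint := adj'.isRightAdjoint
  haveI hunit : IsIso adj'.unit := (Adjunction.Triple.isIso_unit_iff_isIso_counit ⟨adj', adj⟩).mpr inferInstance
  intro Y u
  haveI : IsIso (adj'.unit.app Y) := inferInstance
  set v : H.obj Y ⟶ A := (adj'.homEquiv Y A).symm u with hv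
  have hu : u = adj'.unit.app Y ≫ F.map v := by
    conv_lhs => rw [← (adj'.homEquiv Y A).apply_symm_apply u]
    rw [Adjunction.homEquiv_unit]
  set q : pullback m v ⟶ H.obj Y := pullback.snd m v with hqdef
  obtain ⟨hqmono, hqess⟩ := hm v
  have S1 : IsPullback (F.map (pullback.fst m v)) (F.map q) (F.map m) (F.map v) :=
    (IsPullback.of_hasPullback m v).map F
  have Spb : IsPullback (F.map (pullback.fst m v))
      (F.map q ≫ inv (adj'.unit.app Y)) (F.map m) u := by
    refine S1.of_iso (Iso.refl _) (Iso.refl _) (asIso (adj'.unit.app Y)).symm (Iso.refl _)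
      (by simp) (by simp) (by simp) ?_
    simp [hu]
  have hsnd : Spb.isoPullback.hom ≫ pullback.snd (F.map m) u
      = F.map q ≫ inv (adj'.unit.app Y) := Spb.isoPullback_hom_snd
  haveI : Mono (F.map q) := F.map_mono _
  constructor
  · have : pullback.snd (F.map m) u
        = Spb.isoPullback.inv ≫ (F.map q ≫ inv (adj'.unit.app Y)) :=
      Spb.isoPullback_inv_snd.symm
    rw [this]
    exact mono_comp _ _
  · intro B f hf
    have hnat : f ≫ adj'.unit.app B = adj'.unit.app Y ≫ F.map (H.map f) := by
      simpa using adj'.unit.naturality f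
    have hHf : Mono (q ≫ H.map f) := by
      apply F.mono_of_mono_map
      have hcomp : F.map (q ≫ H.map f)
          = Spb.isoPullback.hom ≫ (pullback.snd (F.map m) u ≫ f) ≫ adj'.unit.app B := by
        have h2 : pullback.snd (F.map m) u
            = Spb.isoPullback.inv ≫ F.map q ≫ inv (adj'.unit.app Y) :=
          Spb.isoPullback_inv_snd.symm
        rw [F.map_comp, h2]
        simp only [Category.assoc, Iso.hom_inv_id_assoc, hnat, IsIso.inv_hom_id_assoc]
      rw [hcomp]
      haveI := hf
      exact mono_comp _ _
    have hHfmono : Mono (H.map f) := hqess (H.map f) hHf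
    haveI : Mono (F.map (H.map f)) := F.map_mono _
    have hfdec : f = adj'.unit.app Y ≫ F.map (H.map f) ≫ inv (adj'.unit.app B) := by
      rw [← Category.assoc, ← hnat]; simp
    rw [hfdec]
    exact mono_comp _ _

end KL

/-- Let `F : C ⥤ X` be a faithful essential localization such that every pullback stable
essential monomorphism in `X` is an isomorphism and `X` is balanced. Then a morphism `m`
in `C` is a pullback stable essential monomorphism if and only if it is a bimorphism. -/
theorem stableEssentialMono_iff_bimorphism
    {C : Type*} [Category C] {X : Type*} [Category X]
    [HasFiniteLimits C] [HasFiniteLimits X] [Balanced X]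
    (F : C ⥤ X) (G : X ⥤ C) (H : X ⥤ C)
    (adj : F ⊣ G) [PreservesFiniteLimits F] [F.Faithful] [G.Full] [G.Faithful]
    (adj' : H ⊣ F)
    (hX : ∀ ⦃S A : X⦄ (n : S ⟶ A), IsStableEssentialMono n → IsIso n)
    {S A : C} (m : S ⟶ A) :
    IsStableEssentialMono m ↔ (Mono m ∧ Epi m) := by
  haveI : F.IsRightAdjoint := adj'.isRightAdjoint
  haveI : F.IsLeftAdjoint := adj.isLeftAdjoint
  constructor
  · intro hm
    haveI h2 : IsIso (F.map m) := hX _ (aux_map_stable F G H adj adj' m hm)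
    exact ⟨F.mono_of_mono_map inferInstance, F.epi_of_epi_map inferInstance⟩
  · rintro ⟨hmono, hepi⟩
    haveI : Mono (F.map m) := F.map_mono m
    haveI : Epi (F.map m) := F.map_epi m
    exact aux_stable_of_isIso F m (isIso_of_mono_of_epi _)
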